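/- Let Ω ⊂ ℝⁿ have finite Lebesgue measure, let γ ∈ L¹(ℝⁿ) be even, and suppose: (i) β > 0 satisfies B[u,u] ≥ β‖u‖²_{L²(Ω)} for every u ∈ L²(ℝⁿ) vanishing a.e. outside Ω; (ii) |f(x,t)| ≤ a₁ + a₂|t|^α for all x ∈ Ω, t ∈ ℝ; (iii) μ > 2 and C₀ ≥ 0 satisfy ∫_Ω ((1/μ) f(x,w(x)) w(x) − F(x,w(x))) dx ≥ −C₀ for every w ∈ L²(ℝⁿ) vanishing a.e. outside Ω with w|_Ω ∈ L^{α+1}(Ω). Let κ > 0 and let (u_j) be a sequence of functions in L²(ℝⁿ), each vanishing a.e. outside Ω with u_j|_Ω ∈ L^{α+1}(Ω), such that for all j: |I[u_j]| ≤ κ and |B[u_j,u_j] − ∫_Ω f(x,u_j(x)) u_j(x) dx| ≤ κμ‖u_j‖_{L²(Ω)}. Then sup_j ‖u_j‖_{L²(Ω)} < ∞. -/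

import Mathlib

open MeasureTheory

/-- The nonlocal bilinear form
`B[u,v] = (1/2) ∬ (u(y)-u(x)) γ(x-y) (v(y)-v(x)) dy dx`. -/
noncomputable def nonlocalForm (n : ℕ) (γ u v : EuclideanSpace ℝ (Fin n) → ℝ) : ℝ :=
  (1/2) * ∫ x, ∫ y, (u y - u x) * γ (x - y) * (v y - v x)

/-- `F(x,t) = ∫₀ᵗ f(x,τ) dτ`. -/
noncomputable def Fanti (n : ℕ) (f : EuclideanSpace ℝ (Fin n) → ℝ → ℝ)
    (x : EuclideanSpace ℝ (Fin n)) (t : ℝ) : ℝ :=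
  ∫ τ in (0:ℝ)..t, f x τ

/-- The energy `I[u] = (1/2) B[u,u] − ∫_Ω F(x,u(x)) dx`. -/
noncomputable def energy (n : ℕ) (Ω : Set (EuclideanSpace ℝ (Fin n)))
    (γ : EuclideanSpace ℝ (Fin n) → ℝ) (f : EuclideanSpace ℝ (Fin n) → ℝ → ℝ)
    (u : EuclideanSpace ℝ (Fin n) → ℝ) : ℝ :=
  (1/2) * nonlocalForm n γ u u - ∫ x in Ω, Fanti n f x (u x)

private lemma PS_aux {c s κ C₀ : ℝ} (hc : 0 < c) (hκ : 0 < κ) (hC₀ : 0 ≤ C₀)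
    (hs : 0 ≤ s) (hkey : c * s ^ 2 ≤ κ * s + κ + C₀) :
    s ≤ max 1 ((2*κ + C₀)/c) := by
  rcases le_or_gt s 1 with hs1 | hs1
  · exact hs1.trans (le_max_left _ _)
  · have hspos : (0:ℝ) < s := lt_trans one_pos hs1
    have h5 : (κ + C₀) * 1 ≤ (κ + C₀) * s :=
      mul_le_mul_of_nonneg_left hs1.le (add_nonneg hκ.le hC₀)
    have h6 : (c * s) * s ≤ (2*κ + C₀) * s := by nlinarith
    have hcs : c * s ≤ 2*κ + C₀ := le_of_mul_le_mul_right h6 hspos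
    have : s ≤ (2*κ + C₀)/c := by
      rw [le_div_iff₀ hc]
      nlinarith
    exact this.trans (le_max_right _ _)

/-- Boundedness of Palais–Smale-type sequences: under the coercivity of `B`, the growth
bound on `f` and the Ambrosetti–Rabinowitz-type integral lower bound, any sequence with
`|I[u_j]| ≤ κ` and `|B[u_j,u_j] − ∫_Ω f(x,u_j)u_j| ≤ κμ‖u_j‖_{L²(Ω)}` is bounded in
`L²(Ω)`. -/
theorem PS_sequence_bounded
    (n : ℕ) (Ω : Set (EuclideanSpace ℝ (Fin n))) (hΩ : MeasurableSet Ω)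
    (hΩfin : volume Ω < ⊤)
    (γ : EuclideanSpace ℝ (Fin n) → ℝ)
    (hγ : Integrable γ) (hγeven : ∀ z, γ (-z) = γ z)
    (f : EuclideanSpace ℝ (Fin n) → ℝ → ℝ)
    (hmeas : ∀ t : ℝ, Measurable fun x => f x t)
    (hcont : ∀ x, Continuous (f x))
    (a₁ a₂ α : ℝ) (ha₁ : 0 < a₁) (ha₂ : 0 < a₂) (hα : 1 < α)
    (hgrowth : ∀ x ∈ Ω, ∀ t : ℝ, |f x t| ≤ a₁ + a₂ * |t| ^ α)
    (β : ℝ) (hβ : 0 < β)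
    (hcoerc : ∀ u : EuclideanSpace ℝ (Fin n) → ℝ,
      MemLp u 2 (volume : Measure (EuclideanSpace ℝ (Fin n))) →
      (∀ᵐ x, x ∉ Ω → u x = 0) →
      β * ∫ x in Ω, (u x) ^ 2 ≤ nonlocalForm n γ u u)
    (μ C₀ : ℝ) (hμ : 2 < μ) (hC₀ : 0 ≤ C₀)
    (hAR : ∀ w : EuclideanSpace ℝ (Fin n) → ℝ,
      MemLp w 2 (volume : Measure (EuclideanSpace ℝ (Fin n))) →
      (∀ᵐ x, x ∉ Ω → w x = 0) →
      MemLp w (ENNReal.ofReal (α + 1)) (volume.restrict Ω) →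
      -C₀ ≤ ∫ x in Ω, ((1 / μ) * f x (w x) * w x - Fanti n f x (w x)))
    (κ : ℝ) (hκ : 0 < κ)
    (u : ℕ → EuclideanSpace ℝ (Fin n) → ℝ)
    (hu2 : ∀ j, MemLp (u j) 2 (volume : Measure (EuclideanSpace ℝ (Fin n))))
    (hu0 : ∀ j, ∀ᵐ x, x ∉ Ω → u j x = 0)
    (huα : ∀ j, MemLp (u j) (ENNReal.ofReal (α + 1)) (volume.restrict Ω))
    (hIb : ∀ j, |energy n Ω γ f (u j)| ≤ κ)
    (hDb : ∀ j, |nonlocalForm n γ (u j) (u j) - ∫ x in Ω, f x (u j x) * u j x| ≤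
      κ * μ * Real.sqrt (∫ x in Ω, (u j x) ^ 2)) :
    ∃ M : ℝ, ∀ j, Real.sqrt (∫ x in Ω, (u j x) ^ 2) ≤ M := by
    classical
  have hμ0 : (0:ℝ) < μ := by linarith
  have hα0 : (0:ℝ) ≤ α := by linarith
  have hcpos : (0:ℝ) < (1/2 - 1/μ) * β := by
    have : 1/μ < 1/2 := by
      rw [div_lt_div_iff₀ hμ0 (by norm_num)]; linarith
    have h12 : (0:ℝ) < 1/2 - 1/μ := by linarith
    exact mul_pos h12 hβ
  set c : ℝ := (1/2 - 1/μ) * β with hc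
  haveI : IsFiniteMeasure (volume.restrict Ω : Measure (EuclideanSpace ℝ (Fin n))) :=
    ⟨by rwa [Measure.restrict_apply_univ]⟩
  -- joint measurability of f
  have hjm : Measurable (Function.uncurry fun t (x : EuclideanSpace ℝ (Fin n)) => f x t) :=
    measurable_uncurry_of_continuous_of_measurable (fun x => hcont x) hmeas
  have hjm' : Measurable (fun p : EuclideanSpace ℝ (Fin n) × ℝ => f p.1 p.2) :=
    hjm.comp measurable_swap
  -- measurability of Fanti in x for each t
  have hFmeas : ∀ t : ℝ, Measurable fun x => Fanti n f x t := by
    intro t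
    have h2 : StronglyMeasurable fun x : EuclideanSpace ℝ (Fin n) =>
        ∫ τ, f x τ ∂(volume.restrict (Set.uIoc 0 t)) :=
      StronglyMeasurable.integral_prod_right' (hjm'.stronglyMeasurable)
    have : (fun x => Fanti n f x t) = fun x =>
        (if (0:ℝ) ≤ t then (1:ℝ) else -1) * ∫ τ in Set.uIoc 0 t, f x τ := by
      funext x
      rw [Fanti, intervalIntegral.intervalIntegral_eq_integral_uIoc, smul_eq_mul]
    rw [this]
    exact h2.measurable.const_mul _
  have hFcont : ∀ x, Continuous fun t => Fanti n f x t := by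
    intro x
    exact intervalIntegral.continuous_primitive (fun a b => (hcont x).intervalIntegrable a b) 0
  have hFjm : Measurable (Function.uncurry fun t (x : EuclideanSpace ℝ (Fin n)) => Fanti n f x t) :=
    measurable_uncurry_of_continuous_of_measurable hFcont hFmeas
  -- the pointwise bound on Fanti
  have hFbound : ∀ x ∈ Ω, ∀ t : ℝ, |Fanti n f x t| ≤ (a₁ + a₂ * |t| ^ α) * |t| := by
    intro x hx t
    have hb : ∀ τ ∈ Set.uIoc (0:ℝ) t, ‖f x τ‖ ≤ a₁ + a₂ * |t| ^ α := by
      intro τ hτ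
      rw [Set.mem_uIoc] at hτ
      have hτle : |τ| ≤ |t| := by
        rcases hτ with ⟨h1, h2⟩ | ⟨h1, h2⟩ <;> rw [abs_le] <;>
          constructor <;> nlinarith [le_abs_self t, neg_abs_le t]
      have := hgrowth x hx τ
      have hr : |τ| ^ α ≤ |t| ^ α :=
        Real.rpow_le_rpow (abs_nonneg _) hτle hα0
      calc ‖f x τ‖ = |f x τ| := rfl
        _ ≤ a₁ + a₂ * |τ| ^ α := this
        _ ≤ a₁ + a₂ * |t| ^ α := by nlinarith
    have := intervalIntegral.norm_integral_le_of_norm_le_const hb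
    rw [sub_zero] at this
    exact this
  have habs : ∀ t : ℝ, |t| ^ α * |t| = |t| ^ (α + 1) := by
    intro t
    rcases eq_or_ne t 0 with h | h
    · simp [h, Real.zero_rpow (by positivity : α + 1 ≠ 0),
        Real.zero_rpow (by positivity : α ≠ 0)]
    · rw [Real.rpow_add_one (abs_ne_zero.mpr h)]
  -- main per-j bound
  refine ⟨max 1 ((2*κ + C₀)/c), fun j => ?_⟩
  set v := u j with hv
  set N := ∫ x in Ω, v x ^ 2 with hN
  set s := Real.sqrt N with hsdef
  have hNnn : 0 ≤ N := integral_nonneg fun x => sq_nonneg _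
  have hsq : s ^ 2 = N := Real.sq_sqrt hNnn
  have hsnn : 0 ≤ s := Real.sqrt_nonneg _
  -- measurable representative of v
  obtain ⟨v', hv'sm, hv'ae⟩ := (hu2 j).aestronglyMeasurable
  have hv'm : Measurable v' := hv'sm.measurable
  have hvres : v =ᵐ[volume.restrict Ω] v' := ae_restrict_of_ae hv'ae
  -- a.e. strong measurability of the two integrands
  have hfv'm : Measurable fun x => f x (v' x) := by
    have : (fun x => f x (v' x)) =
        (Function.uncurry fun t (x : EuclideanSpace ℝ (Fin n)) => f x t) ∘
          (fun x => (v' x, x)) := rfl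
    rw [this]
    exact hjm.comp (hv'm.prodMk measurable_id)
  have hFv'm : Measurable fun x => Fanti n f x (v' x) := by
    have : (fun x => Fanti n f x (v' x)) =
        (Function.uncurry fun t (x : EuclideanSpace ℝ (Fin n)) => Fanti n f x t) ∘
          (fun x => (v' x, x)) := rfl
    rw [this]
    exact hFjm.comp (hv'm.prodMk measurable_id)
  have hfvsm : AEStronglyMeasurable (fun x => f x (v x) * v x) (volume.restrict Ω) := by
    refine ((hfv'm.mul hv'm).aestronglyMeasurable).congr ?_
    filter_upwards [hvres] with x hx
    rw [hx]
    rfl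
  have hFvsm : AEStronglyMeasurable (fun x => Fanti n f x (v x)) (volume.restrict Ω) := by
    refine (hFv'm.aestronglyMeasurable).congr ?_
    filter_upwards [hvres] with x hx
    rw [hx]
  -- integrable dominating function
  have hv1 : Integrable v (volume.restrict Ω) := by
    have := ((hu2 j).restrict Ω).mono_exponent (p := 1) (by norm_num)
    exact memLp_one_iff_integrable.mp this
  have hvα1 : Integrable (fun x => |v x| ^ (α + 1)) (volume.restrict Ω) := by
    have h0 : (ENNReal.ofReal (α + 1)) ≠ 0 := by
      simp [ENNReal.ofReal_eq_zero]; linarith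
    have htop : (ENNReal.ofReal (α + 1)) ≠ ⊤ := ENNReal.ofReal_ne_top
    have := (huα j).integrable_norm_rpow h0 htop
    rw [ENNReal.toReal_ofReal (by linarith)] at this
    simpa [Real.norm_eq_abs] using this
  set g : EuclideanSpace ℝ (Fin n) → ℝ := fun x => a₁ * |v x| + a₂ * |v x| ^ (α + 1) with hg
  have hgint : Integrable g (volume.restrict Ω) := by
    refine Integrable.add ?_ (hvα1.const_mul a₂)
    simpa [Real.norm_eq_abs] using hv1.norm.const_mul a₁
  have hgb : ∀ x ∈ Ω, (a₁ + a₂ * |v x| ^ α) * |v x| = g x := by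
    intro x hx
    rw [hg, add_mul, mul_assoc, habs]
  -- integrability of the two integrands
  have hfvint : Integrable (fun x => f x (v x) * v x) (volume.restrict Ω) := by
    refine Integrable.mono' hgint hfvsm ?_
    filter_upwards [ae_restrict_mem hΩ] with x hx
    rw [Real.norm_eq_abs, abs_mul, ← hgb x hx]
    exact mul_le_mul_of_nonneg_right (hgrowth x hx (v x)) (abs_nonneg _)
  have hFvint : Integrable (fun x => Fanti n f x (v x)) (volume.restrict Ω) := by
    refine Integrable.mono' hgint hFvsm ?_
    filter_upwards [ae_restrict_mem hΩ] with x hx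
    rw [Real.norm_eq_abs, ← hgb x hx]
    exact hFbound x hx (v x)
  -- splitting of the AR integral
  have hsplit : (∫ x in Ω, ((1/μ) * f x (v x) * v x - Fanti n f x (v x)))
      = (1/μ) * (∫ x in Ω, f x (v x) * v x) - ∫ x in Ω, Fanti n f x (v x) := by
    have h1 : Integrable (fun x => (1/μ) * (f x (v x) * v x)) (volume.restrict Ω) :=
      hfvint.const_mul (1/μ)
    rw [show (fun x => (1/μ) * f x (v x) * v x - Fanti n f x (v x))
        = fun x => (1/μ) * (f x (v x) * v x) - Fanti n f x (v x) by
      funext x; ring]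
    rw [integral_sub h1 hFvint, integral_const_mul]
  -- the key quantities
  set B := nonlocalForm n γ v v with hB
  set P := ∫ x in Ω, f x (v x) * v x with hP
  set Q := ∫ x in Ω, Fanti n f x (v x) with hQ
  have h1 : β * s ^ 2 ≤ B := by rw [hsq]; exact hcoerc v (hu2 j) (hu0 j)
  have h2 : (1/2) * B - Q ≤ κ := by
    have := (abs_le.mp (hIb j)).2
    simpa [energy, ← hB, ← hQ] using this
  have h3 : -(κ * μ * s) ≤ B - P := (abs_le.mp (hDb j)).1
  have h4 : -C₀ ≤ (1/μ) * P - Q := by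
    rw [← hsplit]
    exact hAR v (hu2 j) (hu0 j) (huα j)
  have h3' : -(κ * s) ≤ (1/μ) * (B - P) := by
    have := mul_le_mul_of_nonneg_left h3 (by positivity : (0:ℝ) ≤ 1/μ)
    calc -(κ * s) = (1/μ) * -(κ * μ * s) := by field_simp
      _ ≤ (1/μ) * (B - P) := this
  have hkey : c * s ^ 2 ≤ κ * s + κ + C₀ := by
    have hBineq : (1/2 - 1/μ) * B ≤ κ + κ * s + C₀ := by nlinarith
    have h12 : (0:ℝ) ≤ 1/2 - 1/μ := by nlinarith [hcpos, hβ]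
    have : c * s ^ 2 ≤ (1/2 - 1/μ) * B := by
      rw [hc, mul_assoc]
      exact mul_le_mul_of_nonneg_left h1 h12
    linarith
  exact PS_aux hcpos hκ hC₀ hsnn hkey
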